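/- Let M, N, K be positive integers with K ≥ 2 and N ≥ (K+1)M−1, let s be an integer with 1 ≤ s ≤ K, let r be a real with 0 ≤ r < M, set l = ⌊r⌋ and C = MN − l(l+1) − (N+M−1−2l)·r. For a family ξ = (ξ_{i,j})_{1 ≤ i ≤ N, 1 ≤ j ≤ KM} of reals in [0, KMN], define for each a ∈ {0,…,s−1} and b ∈ {1,…,M}: A(aM+b) = (N−b+1)·min_{aM+b ≤ z ≤ N} ξ_{z, aM+b} + Σ_{i=1}^{min(M−l−1, b−1)} min_{aM+b−i ≤ z ≤ N} ξ_{z, aM+b} (the second sum being empty when min(M−l−1, b−1) = 0). Then the minimum over all such families ξ of (s·C − Σ_{m=1}^{sM} A(m))⁺ + Σ_{i=1}^{N} Σ_{j=1}^{KM} ξ_{i,j} equals the minimum over all families α = (α_1,…,α_{sM}) of reals in [0, KMN] satisfying Σ_{a=0}^{s−1} Σ_{b=1}^{M} (N−b+1)·α_{aM+b} = s·C, of Σ_{m=1}^{sM} (N−m+1)·α_m. Here x⁺ = max(x, 0). -/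

import Mathlib

lemma sum_blocks (M : ℕ) (s : ℕ) (F : ℕ → ℝ) :
    ∑ a ∈ Finset.range s, ∑ b ∈ Finset.Icc 1 M, F (a * M + b)
      = ∑ m ∈ Finset.Icc 1 (s * M), F m := by
  induction s with
  | zero => simp
  | succ n ih =>
      rw [Finset.sum_range_succ, ih]
      have h2 : ∑ b ∈ Finset.Icc 1 M, F (n * M + b)
          = ∑ m ∈ Finset.Icc (n*M + 1) (n*M + M), F m := by
        rw [← Finset.map_add_left_Icc 1 M (n*M), Finset.sum_map]
        simp [addLeftEmbedding]
      rw [h2]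
      have e1 : ∀ x : ℕ, Finset.Icc 1 x = Finset.Ioc 0 x := fun x => by
        exact Finset.Icc_add_one_left_eq_Ioc 0 _
      rw [e1, e1, Finset.Icc_add_one_left_eq_Ioc, Nat.succ_mul]
      exact Finset.sum_Ioc_consecutive F (Nat.zero_le _) (Nat.le_add_right _ _)

lemma sInf_col_facts (ξ : ℕ → ℕ → ℝ) (c w N : ℕ) (hw : w ≤ N)
    (h0 : ∀ z, w ≤ z → z ≤ N → 0 ≤ ξ z c) :
    (0 ≤ sInf {t : ℝ | ∃ z, w ≤ z ∧ z ≤ N ∧ t = ξ z c}) ∧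
      ∀ z, w ≤ z → z ≤ N → sInf {t : ℝ | ∃ z, w ≤ z ∧ z ≤ N ∧ t = ξ z c} ≤ ξ z c := by
  have hne : Set.Nonempty {t : ℝ | ∃ z, w ≤ z ∧ z ≤ N ∧ t = ξ z c} := ⟨ξ N c, N, hw, le_rfl, rfl⟩
  have hlb : ∀ t ∈ {t : ℝ | ∃ z, w ≤ z ∧ z ≤ N ∧ t = ξ z c}, (0:ℝ) ≤ t := by
    rintro t ⟨z, h1, h2, rfl⟩; exact h0 z h1 h2
  exact ⟨le_csInf hne hlb, fun z h1 h2 => csInf_le ⟨0, hlb⟩ ⟨z, h1, h2, rfl⟩⟩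


/-- The index `l` of the interval of average dimensions per channel use `D`
to which `D` belongs: the smallest `l` with `D ≤ (MN − l(l+1))/(N+M−1−2l)`. -/
noncomputable def lIdx (M N : ℕ) (D : ℝ) : ℕ :=
  sInf {l : ℕ |
    D ≤ ((M : ℝ) * (N : ℝ) - (l : ℝ) * ((l : ℝ) + 1)) /
        ((N : ℝ) + (M : ℝ) - 1 - 2 * (l : ℝ))}

/-- The upper bound `d^{D}_{M,N}(r)` on the DMT of infinite constellations with
`D` average dimensions per channel use, in a point-to-point channel with `M`
transmit and `N` receive antennas.  It vanishes for `r ≥ D` or `D = 0`, and for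
`0 ≤ r < D` it is the straight line `((M−l)(N−l)/(D−l))·(D−r)` where `l = lIdx M N D`
is determined by the interval of `D`. -/
noncomputable def dIC (M N : ℕ) (D r : ℝ) : ℝ :=
  if D ≤ 0 ∨ D ≤ r then 0
  else
    (((M : ℝ) - (lIdx M N D : ℝ)) * ((N : ℝ) - (lIdx M N D : ℝ)) /
        (D - (lIdx M N D : ℝ))) * (D - r)

/-- The optimal point-to-point DMT `d^{FC}_{M,N}(r)` of finite constellations:
the piecewise linear function through the points `(l, (M−l)(N−l))`. -/
noncomputable def dFC (M N : ℕ) (r : ℝ) : ℝ :=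
  ((M : ℝ) - (⌊r⌋ : ℝ)) * ((N : ℝ) - (⌊r⌋ : ℝ))
    + (r - (⌊r⌋ : ℝ)) *
      (((M : ℝ) - (⌊r⌋ : ℝ) - 1) * ((N : ℝ) - (⌊r⌋ : ℝ) - 1)
        - ((M : ℝ) - (⌊r⌋ : ℝ)) * ((N : ℝ) - (⌊r⌋ : ℝ)))

/-- The optimal symmetric multiple-access DMT `d^{FC}_{K,M,N}(r)` of finite
constellations: it equals `d^{FC}_{M,N}(r)` for `r ≤ min(N/(K+1), M)` and
`d^{FC}_{KM,N}(K·r)` afterwards. -/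
noncomputable def dFCmac (K M N : ℕ) (r : ℝ) : ℝ :=
  if r ≤ min ((N : ℝ) / ((K : ℝ) + 1)) (M : ℝ) then dFC M N r
  else dFC (K * M) N ((K : ℝ) * r)

set_option maxHeartbeats 1600000 in
theorem stmt17 (M N K : ℕ) (hM : 0 < M) (hN : 0 < N) (hK : 2 ≤ K)
    (hNK : (K + 1) * M - 1 ≤ N) (s : ℕ) (hs1 : 1 ≤ s) (hsK : s ≤ K)
    (r : ℝ) (hr0 : 0 ≤ r) (hrM : r < (M : ℝ)) :
    let l : ℕ := (⌊r⌋).toNat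
    let C : ℝ := (M : ℝ) * (N : ℝ) - (l : ℝ) * ((l : ℝ) + 1)
        - ((N : ℝ) + (M : ℝ) - 1 - 2 * (l : ℝ)) * r
    let A : (ℕ → ℕ → ℝ) → ℕ → ℕ → ℝ := fun ξ a b =>
      ((N : ℝ) - (b : ℝ) + 1) *
          sInf {t : ℝ | ∃ z : ℕ, a * M + b ≤ z ∧ z ≤ N ∧ t = ξ z (a * M + b)}
        + ∑ i ∈ Finset.Icc 1 (min (M - l - 1) (b - 1)),
            sInf {t : ℝ | ∃ z : ℕ, a * M + b - i ≤ z ∧ z ≤ N ∧ t = ξ z (a * M + b)}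
    sInf {x : ℝ | ∃ ξ : ℕ → ℕ → ℝ,
        (∀ i j, 1 ≤ i → i ≤ N → 1 ≤ j → j ≤ K * M →
          0 ≤ ξ i j ∧ ξ i j ≤ (K : ℝ) * (M : ℝ) * (N : ℝ)) ∧
        x = max ((s : ℝ) * C - ∑ a ∈ Finset.range s, ∑ b ∈ Finset.Icc 1 M, A ξ a b) 0
            + ∑ i ∈ Finset.Icc 1 N, ∑ j ∈ Finset.Icc 1 (K * M), ξ i j}
    = sInf {y : ℝ | ∃ α : ℕ → ℝ,
        (∀ m, 1 ≤ m → m ≤ s * M → 0 ≤ α m ∧ α m ≤ (K : ℝ) * (M : ℝ) * (N : ℝ)) ∧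
        (∑ a ∈ Finset.range s, ∑ b ∈ Finset.Icc 1 M,
            ((N : ℝ) - (b : ℝ) + 1) * α (a * M + b)) = (s : ℝ) * C ∧
        y = ∑ m ∈ Finset.Icc 1 (s * M), ((N : ℝ) - (m : ℝ) + 1) * α m} := by
  obtain ⟨p, rfl⟩ : ∃ p, s = p + 1 := ⟨s - 1, by omega⟩
  intro l C A
  have hA : A = fun (ξ : ℕ → ℕ → ℝ) (a b : ℕ) =>
      ((N : ℝ) - (b : ℝ) + 1) *
          sInf {t : ℝ | ∃ z : ℕ, a * M + b ≤ z ∧ z ≤ N ∧ t = ξ z (a * M + b)}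
        + ∑ i ∈ Finset.Icc 1 (min (M - l - 1) (b - 1)),
            sInf {t : ℝ | ∃ z : ℕ, a * M + b - i ≤ z ∧ z ≤ N ∧ t = ξ z (a * M + b)} := rfl
  have hCdef : C = (M : ℝ) * (N : ℝ) - (l : ℝ) * ((l : ℝ) + 1)
      - ((N : ℝ) + (M : ℝ) - 1 - 2 * (l : ℝ)) * r := rfl
  have hldef : l = (⌊r⌋).toNat := rfl
  clear_value l C A
  -- natural number facts
  have hK1 : (K+1)*M ≤ N + 1 := Nat.sub_le_iff_le_add.mp hNK
  have hsM_le_KM : (p+1)*M ≤ K*M := Nat.mul_le_mul_right M hsK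
  have hKM_M : K*M + M = (K+1)*M := by ring
  have hKMN : K*M ≤ N := by omega
  have hsMN : (p+1)*M ≤ N := le_trans hsM_le_KM hKMN
  have hMsM : M ≤ (p+1)*M := by
    calc M = 1*M := (one_mul M).symm
    _ ≤ (p+1)*M := Nat.mul_le_mul_right M (by omega)
  have hMN : M ≤ N := le_trans hMsM hsMN
  -- floor facts
  have hl0 : (0:ℤ) ≤ ⌊r⌋ := Int.floor_nonneg.mpr hr0
  have hlcast : ((l:ℕ):ℝ) = ((⌊r⌋ : ℤ) : ℝ) := by
    have : ((l:ℕ):ℤ) = ⌊r⌋ := by rw [hldef]; exact_mod_cast Int.toNat_of_nonneg hl0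
    exact_mod_cast congrArg (fun z : ℤ => (z : ℝ)) this
  have hlr : (l:ℝ) ≤ r := by rw [hlcast]; exact Int.floor_le r
  have hrl : r < (l:ℝ) + 1 := by rw [hlcast]; exact Int.lt_floor_add_one r
  have hlM : (l:ℝ) + 1 ≤ (M:ℝ) := by
    have h1 : ⌊r⌋ < (M:ℤ) := Int.floor_lt.mpr (by exact_mod_cast hrM)
    have h2 : ⌊r⌋ + 1 ≤ (M:ℤ) := h1
    rw [hlcast]; exact_mod_cast h2
  have hMNr : (M:ℝ) ≤ (N:ℝ) := by exact_mod_cast hMN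
  have hsMNr : ((p:ℝ)+1)*(M:ℝ) ≤ (N:ℝ) := by exact_mod_cast hsMN
  have hMr1 : (1:ℝ) ≤ (M:ℝ) := by exact_mod_cast hM
  -- C facts
  have hC0 : 0 ≤ C := by
    have hid : C = (1-(r-(l:ℝ)))*(((M:ℝ)-l)*((N:ℝ)-l))
        + (r-(l:ℝ))*(((M:ℝ)-l-1)*((N:ℝ)-l-1)) := by rw [hCdef]; ring
    have h1 : (0:ℝ) ≤ (1-(r-(l:ℝ)))*(((M:ℝ)-l)*((N:ℝ)-l)) :=
      mul_nonneg (by linarith) (mul_nonneg (by linarith) (by linarith))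
    have h2 : (0:ℝ) ≤ (r-(l:ℝ))*(((M:ℝ)-l-1)*((N:ℝ)-l-1)) :=
      mul_nonneg (by linarith) (mul_nonneg (by linarith) (by linarith))
    linarith [hid, h1, h2]
  have hCle : C ≤ (M:ℝ)*(N:ℝ) := by
    have hl0r : (0:ℝ) ≤ (l:ℝ) := Nat.cast_nonneg l
    have h1 : (0:ℝ) ≤ (N:ℝ)+(M:ℝ)-1-2*(l:ℝ) := by linarith
    have h2 := mul_nonneg h1 hr0
    have h3 : (0:ℝ) ≤ (l:ℝ)*((l:ℝ)+1) := mul_nonneg hl0r (by linarith)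
    rw [hCdef]; linarith
  have hden : (0:ℝ) < (N:ℝ) - M + 1 := by linarith
  have hKMN0r : (0:ℝ) ≤ (K:ℝ)*(M:ℝ)*(N:ℝ) := by positivity
  have hpK : (((p+1):ℕ):ℝ) ≤ (K:ℝ) := by exact_mod_cast hsK
  have hsC0 : (0:ℝ) ≤ (((p+1):ℕ):ℝ) * C := mul_nonneg (Nat.cast_nonneg _) hC0
  have hsCle : (((p+1):ℕ):ℝ) * C ≤ (K:ℝ)*(M:ℝ)*(N:ℝ) := by
    calc (((p+1):ℕ):ℝ) * C ≤ (K:ℝ) * C := mul_le_mul_of_nonneg_right hpK hC0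
    _ ≤ (K:ℝ) * ((M:ℝ)*(N:ℝ)) := mul_le_mul_of_nonneg_left hCle (by positivity)
    _ = (K:ℝ)*(M:ℝ)*(N:ℝ) := (mul_assoc _ _ _).symm
  set ρ : ℝ := ((N:ℝ) - ((p:ℝ)+1)*(M:ℝ) + 1) / ((N:ℝ) - (M:ℝ) + 1) with hρdef
  have hρ0 : 0 ≤ ρ := div_nonneg (by linarith) hden.le
  have hρ1 : ρ ≤ 1 := by
    rw [hρdef, div_le_one hden]
    have : (M:ℝ) ≤ ((p:ℝ)+1)*(M:ℝ) := by nlinarith [Nat.cast_nonneg (α := ℝ) p]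
    linarith
  set V : ℝ := ρ * ((((p+1):ℕ):ℝ) * C) with hVdef
  set c0 : ℝ := ((((p+1):ℕ):ℝ) * C)/((N:ℝ)-(M:ℝ)+1) with hc0def
  have hmemV : V ∈ {y : ℝ | ∃ α : ℕ → ℝ,
      (∀ m, 1 ≤ m → m ≤ (p+1) * M → 0 ≤ α m ∧ α m ≤ (K : ℝ) * (M : ℝ) * (N : ℝ)) ∧
      (∑ a ∈ Finset.range (p+1), ∑ b ∈ Finset.Icc 1 M,
          ((N : ℝ) - (b : ℝ) + 1) * α (a * M + b)) = (((p+1):ℕ) : ℝ) * C ∧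
      y = ∑ m ∈ Finset.Icc 1 ((p+1) * M), ((N : ℝ) - (m : ℝ) + 1) * α m} := by
    refine ⟨fun m => if m = (p+1)*M then c0 else 0, ?_, ?_, ?_⟩
    · intro m h1 h2
      dsimp only
      split_ifs
      · constructor
        · exact div_nonneg hsC0 hden.le
        · rw [hc0def, div_le_iff₀ hden]
          have hh := mul_le_mul_of_nonneg_left (show (1:ℝ) ≤ (N:ℝ)-(M:ℝ)+1 by linarith) hKMN0r
          linarith
      · exact ⟨le_rfl, hKMN0r⟩
    · dsimp only
      rw [Finset.sum_eq_single_of_mem p (Finset.self_mem_range_succ p) ?_]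
      · rw [Finset.sum_eq_single_of_mem M (Finset.mem_Icc.mpr ⟨hM, le_rfl⟩) ?_]
        · rw [if_pos (by ring : p*M+M = (p+1)*M), hc0def]
          field_simp
        · intro b hb hbne
          have hb' := Finset.mem_Icc.mp hb
          have h3 : (p+1)*M = p*M+M := Nat.succ_mul p M
          rw [if_neg (by omega), mul_zero]
      · intro a ha hane
        apply Finset.sum_eq_zero; intro b hb
        have hb' := Finset.mem_Icc.mp hb
        have ha' := Finset.mem_range.mp ha
        have h1 : (a+1)*M ≤ p*M := Nat.mul_le_mul_right M (by omega)
        have h2 : a*M + M = (a+1)*M := (Nat.succ_mul a M).symm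
        have h3 : (p+1)*M = p*M + M := Nat.succ_mul p M
        rw [if_neg (by omega), mul_zero]
    · dsimp only
      rw [Finset.sum_eq_single_of_mem ((p+1)*M)
          (Finset.mem_Icc.mpr ⟨Nat.mul_pos p.succ_pos hM, le_rfl⟩) ?_]
      · rw [if_pos rfl, hVdef, hρdef, hc0def]
        have hcst : (((p+1)*M : ℕ):ℝ) = ((p:ℝ)+1)*(M:ℝ) := by push_cast; ring
        rw [hcst]
        field_simp
      · intro m hm hne
        rw [if_neg hne, mul_zero]
  have hsub : {y : ℝ | ∃ α : ℕ → ℝ,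
      (∀ m, 1 ≤ m → m ≤ (p+1) * M → 0 ≤ α m ∧ α m ≤ (K : ℝ) * (M : ℝ) * (N : ℝ)) ∧
      (∑ a ∈ Finset.range (p+1), ∑ b ∈ Finset.Icc 1 M,
          ((N : ℝ) - (b : ℝ) + 1) * α (a * M + b)) = (((p+1):ℕ) : ℝ) * C ∧
      y = ∑ m ∈ Finset.Icc 1 ((p+1) * M), ((N : ℝ) - (m : ℝ) + 1) * α m} ⊆
      {x : ℝ | ∃ ξ : ℕ → ℕ → ℝ,
      (∀ i j, 1 ≤ i → i ≤ N → 1 ≤ j → j ≤ K * M →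
        0 ≤ ξ i j ∧ ξ i j ≤ (K : ℝ) * (M : ℝ) * (N : ℝ)) ∧
      x = max ((((p+1):ℕ) : ℝ) * C
            - ∑ a ∈ Finset.range (p+1), ∑ b ∈ Finset.Icc 1 M, A ξ a b) 0
          + ∑ i ∈ Finset.Icc 1 N, ∑ j ∈ Finset.Icc 1 (K * M), ξ i j} := by
    rintro y ⟨α, hαb, hconstr, rfl⟩
    refine ⟨fun i j => if j ≤ (p+1)*M ∧ j ≤ i then α j else 0, ?_, ?_⟩
    · intro i j hi1 hiN hj1 hjKM
      dsimp only
      split_ifs with h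
      · exact hαb j hj1 h.1
      · exact ⟨le_rfl, hKMN0r⟩
    · beta_reduce
      have hT : ∑ a ∈ Finset.range (p+1), ∑ b ∈ Finset.Icc 1 M,
          A (fun i j => if j ≤ (p+1)*M ∧ j ≤ i then α j else 0) a b
          = (((p+1):ℕ):ℝ) * C := by
        rw [← hconstr]
        refine Finset.sum_congr rfl fun a ha => Finset.sum_congr rfl fun b hb => ?_
        obtain ⟨hb1, hbM⟩ := Finset.mem_Icc.mp hb
        have ha' := Finset.mem_range.mp ha
        have hjsM : a*M+b ≤ (p+1)*M := by
          have h1 : (a+1)*M ≤ (p+1)*M := Nat.mul_le_mul_right M (by omega)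
          have h2 : a*M + M = (a+1)*M := (Nat.succ_mul a M).symm
          omega
        have hjN : a*M+b ≤ N := le_trans hjsM hsMN
        have hj1 : 1 ≤ a*M+b := le_trans hb1 (Nat.le_add_left b (a*M))
        rw [hA]
        dsimp only
        have hset1 : {t : ℝ | ∃ z : ℕ, a*M+b ≤ z ∧ z ≤ N ∧
            t = if a*M+b ≤ (p+1)*M ∧ a*M+b ≤ z then α (a*M+b) else 0}
            = {α (a*M+b)} := by
          ext t
          simp only [Set.mem_setOf_eq, Set.mem_singleton_iff]
          constructor
          · rintro ⟨z, hz1, hz2, rfl⟩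
            exact if_pos ⟨hjsM, hz1⟩
          · intro ht
            exact ⟨a*M+b, le_rfl, hjN, by rw [if_pos ⟨hjsM, le_rfl⟩]; exact ht⟩
        rw [hset1, csInf_singleton]
        have hzero : ∀ i ∈ Finset.Icc 1 (min (M - l - 1) (b - 1)),
            sInf {t : ℝ | ∃ z : ℕ, a*M+b-i ≤ z ∧ z ≤ N ∧
              t = if a*M+b ≤ (p+1)*M ∧ a*M+b ≤ z then α (a*M+b) else 0} = 0 := by
          intro i hi
          obtain ⟨hi1, hik⟩ := Finset.mem_Icc.mp hi
          have hib : i ≤ b - 1 := le_trans hik (min_le_right _ _)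
          apply IsLeast.csInf_eq
          constructor
          · refine ⟨a*M+b-i, le_rfl, le_trans (Nat.sub_le _ _) hjN, ?_⟩
            rw [if_neg]
            intro hcon
            omega
          · rintro t ⟨z, hz1, hz2, rfl⟩
            split_ifs with h
            · exact (hαb (a*M+b) hj1 hjsM).1
            · exact le_rfl
        rw [Finset.sum_eq_zero hzero, add_zero]
      rw [hT, sub_self, max_self, zero_add]
      rw [Finset.sum_comm]
      have hvan : ∀ j ∈ Finset.Icc 1 (K*M), j ∉ Finset.Icc 1 ((p+1)*M) →
          (∑ i ∈ Finset.Icc 1 N, if j ≤ (p+1)*M ∧ j ≤ i then α j else 0) = 0 := by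
        intro j hj hj2
        apply Finset.sum_eq_zero
        intro i hi
        have hj' := Finset.mem_Icc.mp hj
        have h2 : ¬ (j ≤ (p+1)*M) := fun hc => hj2 (Finset.mem_Icc.mpr ⟨hj'.1, hc⟩)
        exact if_neg (fun hc => h2 hc.1)
      rw [← Finset.sum_subset (Finset.Icc_subset_Icc le_rfl hsM_le_KM) hvan]
      refine Finset.sum_congr rfl fun j hj => ?_
      obtain ⟨hj1, hjsM⟩ := Finset.mem_Icc.mp hj
      have hjN : j ≤ N := le_trans hjsM hsMN
      have e1 : ∀ i ∈ Finset.Icc 1 N, (if j ≤ (p+1)*M ∧ j ≤ i then α j else 0)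
          = if i ∈ Finset.Icc j N then α j else 0 := by
        intro i hi
        obtain ⟨hi1, hiN⟩ := Finset.mem_Icc.mp hi
        by_cases h : j ≤ i
        · rw [if_pos ⟨hjsM, h⟩, if_pos (Finset.mem_Icc.mpr ⟨h, hiN⟩)]
        · rw [if_neg (fun hc => h hc.2), if_neg (fun hc => h (Finset.mem_Icc.mp hc).1)]
      rw [Finset.sum_congr rfl e1, Finset.sum_ite_mem]
      have e2 : Finset.Icc 1 N ∩ Finset.Icc j N = Finset.Icc j N := by
        ext z; simp only [Finset.mem_inter, Finset.mem_Icc]; omega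
      rw [e2, Finset.sum_const, Nat.card_Icc, nsmul_eq_mul]
      rw [Nat.cast_sub (by omega : j ≤ N+1)]
      push_cast
      ring
  have hbdd2 : BddBelow {y : ℝ | ∃ α : ℕ → ℝ,
      (∀ m, 1 ≤ m → m ≤ (p+1) * M → 0 ≤ α m ∧ α m ≤ (K : ℝ) * (M : ℝ) * (N : ℝ)) ∧
      (∑ a ∈ Finset.range (p+1), ∑ b ∈ Finset.Icc 1 M,
          ((N : ℝ) - (b : ℝ) + 1) * α (a * M + b)) = (((p+1):ℕ) : ℝ) * C ∧
      y = ∑ m ∈ Finset.Icc 1 ((p+1) * M), ((N : ℝ) - (m : ℝ) + 1) * α m} := by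
    refine ⟨0, ?_⟩
    rintro y ⟨α, hαb, -, rfl⟩
    apply Finset.sum_nonneg
    intro m hm
    obtain ⟨h1, h2⟩ := Finset.mem_Icc.mp hm
    have hmN : m ≤ N := le_trans h2 hsMN
    have hmNr : (m:ℝ) ≤ (N:ℝ) := by exact_mod_cast hmN
    exact mul_nonneg (by linarith) (hαb m h1 h2).1
  have hbdd1 : BddBelow {x : ℝ | ∃ ξ : ℕ → ℕ → ℝ,
      (∀ i j, 1 ≤ i → i ≤ N → 1 ≤ j → j ≤ K * M →
        0 ≤ ξ i j ∧ ξ i j ≤ (K : ℝ) * (M : ℝ) * (N : ℝ)) ∧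
      x = max ((((p+1):ℕ) : ℝ) * C
            - ∑ a ∈ Finset.range (p+1), ∑ b ∈ Finset.Icc 1 M, A ξ a b) 0
          + ∑ i ∈ Finset.Icc 1 N, ∑ j ∈ Finset.Icc 1 (K * M), ξ i j} := by
    refine ⟨0, ?_⟩
    rintro x ⟨ξ, hξb, rfl⟩
    have h1 : (0:ℝ) ≤ max ((((p+1):ℕ) : ℝ) * C
        - ∑ a ∈ Finset.range (p+1), ∑ b ∈ Finset.Icc 1 M, A ξ a b) 0 := le_max_right _ _
    have h2 : (0:ℝ) ≤ ∑ i ∈ Finset.Icc 1 N, ∑ j ∈ Finset.Icc 1 (K * M), ξ i j :=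
      Finset.sum_nonneg fun i hi => Finset.sum_nonneg fun j hj =>
        (hξb i j (Finset.mem_Icc.mp hi).1 (Finset.mem_Icc.mp hi).2
          (Finset.mem_Icc.mp hj).1 (Finset.mem_Icc.mp hj).2).1
    linarith
  have hlb : ∀ x ∈ {x : ℝ | ∃ ξ : ℕ → ℕ → ℝ,
      (∀ i j, 1 ≤ i → i ≤ N → 1 ≤ j → j ≤ K * M →
        0 ≤ ξ i j ∧ ξ i j ≤ (K : ℝ) * (M : ℝ) * (N : ℝ)) ∧
      x = max ((((p+1):ℕ) : ℝ) * C
            - ∑ a ∈ Finset.range (p+1), ∑ b ∈ Finset.Icc 1 M, A ξ a b) 0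
          + ∑ i ∈ Finset.Icc 1 N, ∑ j ∈ Finset.Icc 1 (K * M), ξ i j}, V ≤ x := by
    rintro x ⟨ξ, hξb, rfl⟩
    have hcol : ∀ a ∈ Finset.range (p+1), ∀ b ∈ Finset.Icc 1 M,
        ρ * A ξ a b ≤ ∑ i ∈ Finset.Icc 1 N, ξ i (a*M+b) := by
      intro a ha b hb
      obtain ⟨hb1, hbM⟩ := Finset.mem_Icc.mp hb
      have ha' := Finset.mem_range.mp ha
      have hjsM : a*M+b ≤ (p+1)*M := by
        have h1 : (a+1)*M ≤ (p+1)*M := Nat.mul_le_mul_right M (by omega)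
        have h2 : a*M + M = (a+1)*M := (Nat.succ_mul a M).symm
        omega
      have hjN : a*M+b ≤ N := le_trans hjsM hsMN
      have hj1 : 1 ≤ a*M+b := le_trans hb1 (Nat.le_add_left b (a*M))
      have hjKM : a*M+b ≤ K*M := le_trans hjsM hsM_le_KM
      have hjr : ((a*M+b : ℕ):ℝ) = (a:ℝ)*(M:ℝ)+(b:ℝ) := by push_cast; ring
      have hμ := sInf_col_facts ξ (a*M+b) (a*M+b) N hjN
          (fun z h1 h2 => (hξb z (a*M+b) (le_trans hj1 h1) h2 hj1 hjKM).1)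
      obtain ⟨k, hkdef⟩ : ∃ k, min (M-l-1) (b-1) = k := ⟨_, rfl⟩
      have hν : ∀ i, 1 ≤ i → i ≤ b-1 →
          (0 ≤ sInf {t : ℝ | ∃ z, a*M+b-i ≤ z ∧ z ≤ N ∧ t = ξ z (a*M+b)}) ∧
          (∀ z, a*M+b-i ≤ z → z ≤ N →
            sInf {t : ℝ | ∃ z, a*M+b-i ≤ z ∧ z ≤ N ∧ t = ξ z (a*M+b)} ≤ ξ z (a*M+b)) :=
        fun i h1 h2 => sInf_col_facts ξ (a*M+b) (a*M+b-i) N (by omega)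
          (fun z hz1 hz2 => (hξb z (a*M+b) (by omega) hz2 hj1 hjKM).1)
      have hkb : k ≤ b-1 := by rw [← hkdef]; exact min_le_right _ _
      have hS0 : 0 ≤ ∑ i ∈ Finset.Icc 1 k,
          sInf {t : ℝ | ∃ z, a*M+b-i ≤ z ∧ z ≤ N ∧ t = ξ z (a*M+b)} :=
        Finset.sum_nonneg fun i hi =>
          (hν i (Finset.mem_Icc.mp hi).1 (le_trans (Finset.mem_Icc.mp hi).2 hkb)).1
      have e2 : Finset.Icc (a*M+b) N = Finset.Ioc (a*M+b-1) N := by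
        rw [← Finset.Icc_add_one_left_eq_Ioc]; congr 1; omega
      have e3 : Finset.Icc 1 (a*M+b-1) = Finset.Ioc 0 (a*M+b-1) := by exact Finset.Icc_add_one_left_eq_Ioc 0 _
      have e4 : Finset.Icc 1 N = Finset.Ioc 0 N := by exact Finset.Icc_add_one_left_eq_Ioc 0 _
      have hsplit : (∑ z ∈ Finset.Icc 1 (a*M+b-1), ξ z (a*M+b))
          + ∑ z ∈ Finset.Icc (a*M+b) N, ξ z (a*M+b)
          = ∑ z ∈ Finset.Icc 1 N, ξ z (a*M+b) := by
        rw [e2, e3, e4]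
        exact Finset.sum_Ioc_consecutive _ (by omega) (by omega)
      have h1 : ((N+1-(a*M+b) : ℕ):ℝ)
            * sInf {t : ℝ | ∃ z, a*M+b ≤ z ∧ z ≤ N ∧ t = ξ z (a*M+b)}
          ≤ ∑ z ∈ Finset.Icc (a*M+b) N, ξ z (a*M+b) := by
        have hc := Finset.card_nsmul_le_sum (Finset.Icc (a*M+b) N) (fun z => ξ z (a*M+b))
          (sInf {t : ℝ | ∃ z, a*M+b ≤ z ∧ z ≤ N ∧ t = ξ z (a*M+b)})
          (fun z hz => hμ.2 z (Finset.mem_Icc.mp hz).1 (Finset.mem_Icc.mp hz).2)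
        rwa [Nat.card_Icc, nsmul_eq_mul] at hc
      have h2 : (∑ i ∈ Finset.Icc 1 k,
          sInf {t : ℝ | ∃ z, a*M+b-i ≤ z ∧ z ≤ N ∧ t = ξ z (a*M+b)})
          ≤ ∑ z ∈ Finset.Icc 1 (a*M+b-1), ξ z (a*M+b) := by
        have step1 : (∑ i ∈ Finset.Icc 1 k,
            sInf {t : ℝ | ∃ z, a*M+b-i ≤ z ∧ z ≤ N ∧ t = ξ z (a*M+b)})
            ≤ ∑ i ∈ Finset.Icc 1 k, ξ (a*M+b-i) (a*M+b) :=
          Finset.sum_le_sum fun i hi => by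
            obtain ⟨hi1, hik⟩ := Finset.mem_Icc.mp hi
            exact (hν i hi1 (le_trans hik hkb)).2 (a*M+b-i) le_rfl (by omega)
        have step2 : (∑ i ∈ Finset.Icc 1 k, ξ (a*M+b-i) (a*M+b))
            = ∑ z ∈ Finset.Icc (a*M+b-k) (a*M+b-1), ξ z (a*M+b) := by
          refine Finset.sum_nbij' (fun i => a*M+b-i) (fun z => a*M+b-z) ?_ ?_ ?_ ?_ ?_
          · intro i hi
            obtain ⟨hi1, hik⟩ := Finset.mem_Icc.mp hi
            simp only [Finset.mem_Icc]
            omega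
          · intro z hz
            obtain ⟨hz1, hz2⟩ := Finset.mem_Icc.mp hz
            simp only [Finset.mem_Icc]
            omega
          · intro i hi
            obtain ⟨hi1, hik⟩ := Finset.mem_Icc.mp hi
            omega
          · intro z hz
            obtain ⟨hz1, hz2⟩ := Finset.mem_Icc.mp hz
            omega
          · intro i hi
            rfl
        have step3 : (∑ z ∈ Finset.Icc (a*M+b-k) (a*M+b-1), ξ z (a*M+b))
            ≤ ∑ z ∈ Finset.Icc 1 (a*M+b-1), ξ z (a*M+b) :=
          Finset.sum_le_sum_of_subset_of_nonneg
            (Finset.Icc_subset_Icc (by omega) le_rfl)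
            (fun z hz _ => (hξb z (a*M+b) (Finset.mem_Icc.mp hz).1
              (by have := (Finset.mem_Icc.mp hz).2; omega) hj1 hjKM).1)
        linarith
      have hcoef : ρ * ((N:ℝ)-(b:ℝ)+1) ≤ (N:ℝ)-((a*M+b:ℕ):ℝ)+1 := by
        rw [hρdef, div_mul_eq_mul_div, div_le_iff₀ hden]
        have hpa : (a:ℝ) ≤ (p:ℝ) := by exact_mod_cast (show a ≤ p by omega)
        have hbMr : (b:ℝ) ≤ (M:ℝ) := by exact_mod_cast hbM
        have hp0 : (0:ℝ) ≤ (p:ℝ) := Nat.cast_nonneg p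
        have hM0 : (0:ℝ) ≤ (M:ℝ) := Nat.cast_nonneg M
        have hid : ((N:ℝ)-((a*M+b:ℕ):ℝ)+1)*((N:ℝ)-(M:ℝ)+1)
            - ((N:ℝ)-((p:ℝ)+1)*(M:ℝ)+1)*((N:ℝ)-(b:ℝ)+1)
            = (M:ℝ)*(((p:ℝ)-(a:ℝ))*((N:ℝ)+1-(M:ℝ)) + (p:ℝ)*((M:ℝ)-(b:ℝ))) := by
          rw [hjr]; ring
        have hpos : 0 ≤ (M:ℝ)*(((p:ℝ)-(a:ℝ))*((N:ℝ)+1-(M:ℝ)) + (p:ℝ)*((M:ℝ)-(b:ℝ))) :=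
          mul_nonneg hM0 (add_nonneg (mul_nonneg (by linarith) (by linarith))
            (mul_nonneg hp0 (by linarith)))
        linarith
      rw [hA]
      dsimp only
      rw [hkdef]
      have hcast : ((N+1-(a*M+b) : ℕ):ℝ) = (N:ℝ)-((a*M+b:ℕ):ℝ)+1 := by
        rw [Nat.cast_sub (by omega : a*M+b ≤ N+1)]; push_cast; ring
      rw [hcast] at h1
      generalize hμg : sInf {t : ℝ | ∃ z, a*M+b ≤ z ∧ z ≤ N ∧ t = ξ z (a*M+b)} = μv
        at h1 hμ ⊢
      generalize hSg : (∑ i ∈ Finset.Icc 1 k,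
          sInf {t : ℝ | ∃ z, a*M+b-i ≤ z ∧ z ≤ N ∧ t = ξ z (a*M+b)}) = Sv at h2 hS0 ⊢
      have hexp : ρ * (((N:ℝ)-(b:ℝ)+1) * μv + Sv)
          = (ρ * ((N:ℝ)-(b:ℝ)+1)) * μv + ρ * Sv := by ring
      have hi1 : (ρ * ((N:ℝ)-(b:ℝ)+1)) * μv ≤ ((N:ℝ)-((a*M+b:ℕ):ℝ)+1) * μv :=
        mul_le_mul_of_nonneg_right hcoef hμ.1
      have hi2 : ρ * Sv ≤ Sv := by nlinarith [mul_nonneg (sub_nonneg.mpr hρ1) hS0]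
      linarith
    have hTineq : ρ * (∑ a ∈ Finset.range (p+1), ∑ b ∈ Finset.Icc 1 M, A ξ a b)
        ≤ ∑ i ∈ Finset.Icc 1 N, ∑ j ∈ Finset.Icc 1 (K*M), ξ i j := by
      rw [Finset.mul_sum]
      calc ∑ a ∈ Finset.range (p+1), ρ * ∑ b ∈ Finset.Icc 1 M, A ξ a b
          = ∑ a ∈ Finset.range (p+1), ∑ b ∈ Finset.Icc 1 M, ρ * A ξ a b := by
            exact Finset.sum_congr rfl fun a ha => by rw [Finset.mul_sum]
        _ ≤ ∑ a ∈ Finset.range (p+1), ∑ b ∈ Finset.Icc 1 M,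
              ∑ i ∈ Finset.Icc 1 N, ξ i (a*M+b) :=
            Finset.sum_le_sum fun a ha => Finset.sum_le_sum fun b hb => hcol a ha b hb
        _ = ∑ m ∈ Finset.Icc 1 ((p+1)*M), ∑ i ∈ Finset.Icc 1 N, ξ i m :=
            sum_blocks M (p+1) (fun m => ∑ i ∈ Finset.Icc 1 N, ξ i m)
        _ ≤ ∑ j ∈ Finset.Icc 1 (K*M), ∑ i ∈ Finset.Icc 1 N, ξ i j :=
            Finset.sum_le_sum_of_subset_of_nonneg
              (Finset.Icc_subset_Icc le_rfl hsM_le_KM)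
              (fun j hj _ => Finset.sum_nonneg fun i hi =>
                (hξb i j (Finset.mem_Icc.mp hi).1 (Finset.mem_Icc.mp hi).2
                  (Finset.mem_Icc.mp hj).1 (Finset.mem_Icc.mp hj).2).1)
        _ = ∑ i ∈ Finset.Icc 1 N, ∑ j ∈ Finset.Icc 1 (K*M), ξ i j := Finset.sum_comm
    generalize hTg : (∑ a ∈ Finset.range (p+1), ∑ b ∈ Finset.Icc 1 M, A ξ a b) = T
      at hTineq ⊢
    generalize hXg : (∑ i ∈ Finset.Icc 1 N, ∑ j ∈ Finset.Icc 1 (K*M), ξ i j) = X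
      at hTineq ⊢
    rcases le_total ((((p+1):ℕ):ℝ)*C) T with h | h
    · have h3 := mul_le_mul_of_nonneg_left h hρ0
      have h4 := le_max_right ((((p+1):ℕ):ℝ)*C - T) 0
      rw [hVdef]
      linarith
    · have h4 := le_max_left ((((p+1):ℕ):ℝ)*C - T) 0
      have h5 : 0 ≤ (1-ρ) * ((((p+1):ℕ):ℝ)*C - T) :=
        mul_nonneg (by linarith) (by linarith)
      rw [hVdef]
      nlinarith [hTineq, h4, h5]
  exact le_antisymm (csInf_le_csInf hbdd1 ⟨V, hmemV⟩ hsub)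
    (le_trans (csInf_le hbdd2 hmemV)
      (le_csInf (Set.Nonempty.mono hsub ⟨V, hmemV⟩) hlb))
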